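/- Under the hypotheses of the previous first-integral identity, if additionally φ satisfies the asymptotic matching at x = 1, namely φ(1) = (i α₊ + β₊) e^{ik₀} and φ'(1) = ik₀(i α₊ + β₊)e^{ik₀} + i α₊ e^{ik₀}, then necessarily ∫_{-1}^{1} ψ(x)² dx = (α₋² + α₊²) e^{2ik₀} / (2 i k₀). -/

import Mathlib

/-- Condition (30): matching the associated solution at x = 1 forces
∫ψ² = (α₋² + α₊²)e^{2ik₀}/(2ik₀). -/
theorem stmt_12 (k₀ : ℝ) (hk : k₀ ≠ 0) (U : ℝ → ℂ)
    (hU : ContinuousOn U (Set.Icc (-1 : ℝ) 1))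
    (αm αp βm βp : ℂ) (ψ φ : ℝ → ℂ)
    (hψ : ContDiff ℝ 2 ψ) (hφ : ContDiff ℝ 2 φ)
    (hψode : ∀ x ∈ Set.Icc (-1 : ℝ) 1,
      -(deriv (deriv ψ) x) + U x * ψ x = (k₀ : ℂ) ^ 2 * ψ x)
    (hψm : ψ (-1) = αm * Complex.exp (Complex.I * k₀))
    (hψm' : deriv ψ (-1) = -(Complex.I * k₀) * αm * Complex.exp (Complex.I * k₀))
    (hψp : ψ 1 = αp * Complex.exp (Complex.I * k₀))
    (hψp' : deriv ψ 1 = Complex.I * k₀ * αp * Complex.exp (Complex.I * k₀))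
    (hφode : ∀ x ∈ Set.Icc (-1 : ℝ) 1,
      -(deriv (deriv φ) x) + U x * φ x - (k₀ : ℂ) ^ 2 * φ x = 2 * k₀ * ψ x)
    (hφm : φ (-1) = (Complex.I * αm + βm) * Complex.exp (Complex.I * k₀))
    (hφm' : deriv φ (-1) =
      -(Complex.I * k₀) * (Complex.I * αm + βm) * Complex.exp (Complex.I * k₀)
        - Complex.I * αm * Complex.exp (Complex.I * k₀))
    (hφp : φ 1 = (Complex.I * αp + βp) * Complex.exp (Complex.I * k₀))
    (hφp' : deriv φ 1 =
      Complex.I * k₀ * (Complex.I * αp + βp) * Complex.exp (Complex.I * k₀)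
        + Complex.I * αp * Complex.exp (Complex.I * k₀)) :
    (∫ x in (-1 : ℝ)..1, (ψ x) ^ 2) =
      (αm ^ 2 + αp ^ 2) * Complex.exp (2 * Complex.I * k₀) / (2 * Complex.I * k₀) := by
  have hk' : (k₀ : ℂ) ≠ 0 := Complex.ofReal_ne_zero.mpr hk
  have h2 : (2 : WithTop ℕ∞) = 1 + 1 := by norm_num
  have hψd : Differentiable ℝ ψ := hψ.differentiable (by norm_num)
  have hφd : Differentiable ℝ φ := hφ.differentiable (by norm_num)
  have hψ1 : ContDiff ℝ 1 (deriv ψ) := (contDiff_succ_iff_deriv.mp (h2 ▸ hψ)).2.2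
  have hφ1 : ContDiff ℝ 1 (deriv φ) := (contDiff_succ_iff_deriv.mp (h2 ▸ hφ)).2.2
  have hψd' : Differentiable ℝ (deriv ψ) := hψ1.differentiable one_ne_zero
  have hφd' : Differentiable ℝ (deriv φ) := hφ1.differentiable one_ne_zero
  set W : ℝ → ℂ := fun x => deriv ψ x * φ x - ψ x * deriv φ x with hWdef
  have hW' : ∀ x ∈ Set.uIcc (-1 : ℝ) 1,
      HasDerivAt W (2 * (k₀ : ℂ) * (ψ x) ^ 2) x := by
    intro x hx
    rw [Set.uIcc_of_le (by norm_num)] at hx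
    have h1 : HasDerivAt W
        (deriv (deriv ψ) x * φ x + deriv ψ x * deriv φ x -
          (deriv ψ x * deriv φ x + ψ x * deriv (deriv φ) x)) x :=
      (((hψd' x).hasDerivAt.mul (hφd x).hasDerivAt).sub
        ((hψd x).hasDerivAt.mul (hφd' x).hasDerivAt))
    convert h1 using 1
    have e1 := hψode x hx
    have e2 := hφode x hx
    linear_combination (φ x) * e1 - (ψ x) * e2
  have hInt : IntervalIntegrable (fun x => 2 * (k₀ : ℂ) * (ψ x) ^ 2)
      MeasureTheory.volume (-1 : ℝ) 1 :=
    (Continuous.intervalIntegrable (continuous_const.mul (hψ.continuous.pow 2)) (-1) 1)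
  have hFTC := intervalIntegral.integral_eq_sub_of_hasDerivAt hW' hInt
  have hmul : (∫ x in (-1 : ℝ)..1, 2 * (k₀ : ℂ) * (ψ x) ^ 2)
      = 2 * (k₀ : ℂ) * ∫ x in (-1 : ℝ)..1, (ψ x) ^ 2 := by
    rw [intervalIntegral.integral_const_mul]
  have hE : Complex.exp (2 * Complex.I * k₀)
      = Complex.exp (Complex.I * k₀) * Complex.exp (Complex.I * k₀) := by
    rw [← Complex.exp_add]; ring_nf
  have hval : 2 * (k₀ : ℂ) * ∫ x in (-1 : ℝ)..1, (ψ x) ^ 2 = W 1 - W (-1) := by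
    rw [← hmul, hFTC]
  have hWval : W 1 - W (-1)
      = 2 * (k₀ : ℂ) * ((αm ^ 2 + αp ^ 2) * Complex.exp (2 * Complex.I * k₀)
        / (2 * Complex.I * k₀)) := by
    simp only [hWdef]
    rw [hψp, hψp', hφp, hφp', hψm, hψm', hφm, hφm', hE]
    field_simp
    ring_nf
    linear_combination (-(αp ^ 2 + αm ^ 2)) * Complex.I_sq
  rw [hWval] at hval
  exact mul_left_cancel₀ (by simp [hk']) hval
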